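/- Let V be a ℂ-vector space with an alternating bilinear form ⟨·,·⟩, let k ≥ 1 be an integer, let γ₁, γ₂ ∈ V, and let τ, τ′ ∈ ℂ with τ ≠ τ′. Set c = (τ − τ′)·⟨γ₁, γ₂⟩, u = (γ₂ − τ′γ₁)^{⊗k} + (γ₂ − τγ₁)^{⊗k} and v = (τ − τ′)^{−1}·((γ₂ − τ′γ₁)^{⊗k} − (γ₂ − τγ₁)^{⊗k}), elements of the k-th tensor power V^{⊗k}. Then ⟨u, u⟩_k = (1 + (−1)^k)·c^k, ⟨v, v⟩_k = −((1 + (−1)^k)/(τ − τ′)²)·c^k, and ⟨u, v⟩_k = ((1 − (−1)^k)/(τ′ − τ))·c^k. -/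
import Mathlib


open scoped TensorProduct

/-- For an alternating bilinear form `⟨·,·⟩` on a complex vector space `V`, the induced
bilinear form `⟨·,·⟩_k` on the `k`-th tensor power (characterized on simple tensors by
`⟨a₁⊗⋯⊗a_k, b₁⊗⋯⊗b_k⟩_k = ∏ ⟨a_i, b_i⟩`) takes the stated values on
`u = (γ₂−τ′γ₁)^{⊗k} + (γ₂−τγ₁)^{⊗k}` and
`v = (τ−τ′)⁻¹((γ₂−τ′γ₁)^{⊗k} − (γ₂−τγ₁)^{⊗k})`, where `c = (τ−τ′)⟨γ₁,γ₂⟩`. -/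
theorem stmt_14 {V : Type*} [AddCommGroup V] [Module ℂ V]
    (B : V →ₗ[ℂ] V →ₗ[ℂ] ℂ) (hB : ∀ w : V, B w w = 0)
    (k : ℕ) (hk : 1 ≤ k)
    (Bk : (⨂[ℂ]^k V) →ₗ[ℂ] (⨂[ℂ]^k V) →ₗ[ℂ] ℂ)
    (hBk : ∀ a b : Fin k → V,
      Bk (PiTensorProduct.tprod ℂ a) (PiTensorProduct.tprod ℂ b) = ∏ i, B (a i) (b i))
    (γ₁ γ₂ : V) (τ τ' : ℂ) (hττ' : τ ≠ τ')
    (c : ℂ) (hc : c = (τ - τ') * B γ₁ γ₂)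
    (u v : ⨂[ℂ]^k V)
    (hu : u = (PiTensorProduct.tprod ℂ fun _ : Fin k => γ₂ - τ' • γ₁) +
              (PiTensorProduct.tprod ℂ fun _ : Fin k => γ₂ - τ • γ₁))
    (hv : v = (τ - τ')⁻¹ • ((PiTensorProduct.tprod ℂ fun _ : Fin k => γ₂ - τ' • γ₁) -
              (PiTensorProduct.tprod ℂ fun _ : Fin k => γ₂ - τ • γ₁))) :
    Bk u u = (1 + (-1) ^ k) * c ^ k ∧
    Bk v v = -((1 + (-1) ^ k) / (τ - τ') ^ 2) * c ^ k ∧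
    Bk u v = ((1 - (-1) ^ k) / (τ' - τ)) * c ^ k := by
  have hk0 : k ≠ 0 := by omega
  have hd : τ - τ' ≠ 0 := sub_ne_zero.mpr hττ'
  set a : V := γ₂ - τ' • γ₁ with ha
  set b : V := γ₂ - τ • γ₁ with hb
  have hanti : ∀ x y : V, B x y = -B y x := by
    intro x y
    have h := hB (x + y)
    simp only [map_add, LinearMap.add_apply, hB] at h
    linear_combination h
  have hab : B a b = c := by
    simp only [ha, hb, map_sub, map_smul, LinearMap.sub_apply, LinearMap.smul_apply, hB, hc,
      smul_eq_mul, smul_zero, mul_zero]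
    have h21 : B γ₂ γ₁ = -B γ₁ γ₂ := hanti γ₂ γ₁
    rw [h21]; ring
  have hba : B b a = -c := by rw [hanti b a, hab]
  have haa : B a a = 0 := hB a
  have hbb : B b b = 0 := hB b
  set ta := PiTensorProduct.tprod ℂ (fun _ : Fin k => a) with hta
  set tb := PiTensorProduct.tprod ℂ (fun _ : Fin k => b) with htb
  have h1 : Bk ta ta = 0 := by rw [hBk]; simp [haa, hk0]
  have h2 : Bk tb tb = 0 := by rw [hBk]; simp [hbb, hk0]
  have h3 : Bk ta tb = c ^ k := by rw [hBk]; simp [hab]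
  have h4 : Bk tb ta = (-1) ^ k * c ^ k := by
    rw [hBk]; simp only [hba]; rw [Finset.prod_const, Finset.card_univ, Fintype.card_fin, neg_pow]
  subst hu hv
  simp only [map_add, map_sub, map_smul, LinearMap.add_apply, LinearMap.sub_apply,
    LinearMap.smul_apply, smul_eq_mul, h1, h2, h3, h4]
  refine ⟨by ring, ?_, ?_⟩
  · field_simp
    ring
  · have hd' : τ' - τ ≠ 0 := fun h => hd (by linear_combination -h)
    field_simp
    ring
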